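/- Ridge test error via the derivative of the resolvent trace: with G(λ) := (λ I_k + XXᵀ/k)⁻¹ and Ω symmetric PSD, one has λ²·⟨G Ω G⟩ + Δ·⟨(XXᵀ/k)·G·Ω·G⟩ + Δ = Δ·(⟨Ω G⟩ + 1) − λ·(λ − Δ)·∂_λ⟨Ω G⟩, where ∂_λ⟨Ω G(λ)⟩ = −⟨Ω G(λ)²⟩. -/

import Mathlib

open Matrix

attribute [local instance] Matrix.linftyOpNormedRing Matrix.linftyOpNormedAlgebra
  Matrix.linftyOpNormedSpace

lemma aux_smul_posSemidef {k : ℕ} {c : ℝ} (hc : 0 ≤ c) {M : Matrix (Fin k) (Fin k) ℝ}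
    (hM : M.PosSemidef) : (c • M).PosSemidef := by
  have hH : (c • M).IsHermitian := by
    unfold Matrix.IsHermitian; rw [conjTranspose_smul, hM.1.eq]; simp
  refine ⟨hH, fun x => ?_⟩
  exact (hM.smul hc).2 x

lemma aux_smul_one_posDef {k : ℕ} {c : ℝ} (hc : 0 < c) :
    (c • (1 : Matrix (Fin k) (Fin k) ℝ)).PosDef := by
  have hH : (c • (1 : Matrix (Fin k) (Fin k) ℝ)).IsHermitian := by
    unfold Matrix.IsHermitian; rw [conjTranspose_smul]; simp
  refine ⟨hH, fun x hx => ?_⟩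
  exact (PosDef.one.smul hc).2 hx

/-- Ridge test error via the derivative of the resolvent trace: with
`G(t) = (tI + XXᵀ/k)⁻¹` one has `∂_λ⟨ΩG⟩ = −⟨ΩG²⟩` and
`λ²⟨GΩG⟩ + Δ⟨(XXᵀ/k)GΩG⟩ + Δ = Δ(⟨ΩG⟩+1) − λ(λ−Δ)∂_λ⟨ΩG⟩`. -/
theorem ridge_error_derivative_form (k n : ℕ) (hk : 0 < k) (lam Δ : ℝ)
    (hlam : 0 < lam) (hΔ : 0 ≤ Δ) (X : Matrix (Fin k) (Fin n) ℝ)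
    (Ω : Matrix (Fin k) (Fin k) ℝ) (hΩ : Ω.PosSemidef) :
    let G : ℝ → Matrix (Fin k) (Fin k) ℝ :=
      fun t => (t • (1 : Matrix (Fin k) (Fin k) ℝ) + (k : ℝ)⁻¹ • (X * Xᵀ))⁻¹
    HasDerivAt (fun t => (Ω * G t).trace / k) (-((Ω * (G lam * G lam)).trace / k)) lam ∧
    lam ^ 2 * ((G lam * Ω * G lam).trace / k)
        + Δ * ((((k : ℝ)⁻¹ • (X * Xᵀ)) * G lam * Ω * G lam).trace / k) + Δ
      = Δ * ((Ω * G lam).trace / k + 1)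
        + lam * (lam - Δ) * ((Ω * (G lam * G lam)).trace / k) := by
  intro G
  set S : Matrix (Fin k) (Fin k) ℝ := (k : ℝ)⁻¹ • (X * Xᵀ) with hS
  set A : ℝ → Matrix (Fin k) (Fin k) ℝ := fun t => t • 1 + S with hA
  have hSpsd : S.PosSemidef := by
    apply aux_smul_posSemidef (by positivity)
    have := posSemidef_self_mul_conjTranspose X
    rwa [conjTranspose_eq_transpose_of_trivial] at this
  have hApd : (A lam).PosDef := (aux_smul_one_posDef hlam).add_posSemidef hSpsd
  have hAunit : IsUnit (A lam) :=
    (Matrix.isUnit_iff_isUnit_det _).mpr (isUnit_iff_ne_zero.mpr hApd.det_pos.ne')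
  have hAG : A lam * G lam = 1 := by
    exact Matrix.mul_nonsing_inv _ ((Matrix.isUnit_iff_isUnit_det _).mp hAunit)
  -- the derivative of G
  have hAderiv : HasDerivAt A (1 : Matrix (Fin k) (Fin k) ℝ) lam := by
    have h := ((hasDerivAt_id lam).smul_const (1 : Matrix (Fin k) (Fin k) ℝ)).add_const S
    rw [one_smul] at h
    exact h
  obtain ⟨u, hu⟩ := hAunit
  have hu_inv : (↑u⁻¹ : Matrix (Fin k) (Fin k) ℝ) = G lam := by
    rw [← Ring.inverse_unit u, hu, ← Matrix.nonsing_inv_eq_ringInverse]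
  have hfd : HasFDerivAt Ring.inverse
      (-ContinuousLinearMap.mulLeftRight ℝ (Matrix (Fin k) (Fin k) ℝ) ↑u⁻¹ ↑u⁻¹) (A lam) := by
    rw [← hu]; exact hasFDerivAt_ringInverse u
  have hGd : HasDerivAt (fun t => Ring.inverse (A t)) (-(G lam * G lam)) lam := by
    have := hfd.comp_hasDerivAt lam hAderiv
    refine this.congr_deriv ?_
    simp [hu_inv]
  have hGd' : HasDerivAt G (-(G lam * G lam)) lam :=
    hGd.congr_of_eventuallyEq (Filter.Eventually.of_forall fun t =>
      Matrix.nonsing_inv_eq_ringInverse _)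
  -- compose with the linear map M ↦ (Ω * M).trace
  have hL : HasDerivAt (fun t => (Ω * G t).trace) (-(Ω * (G lam * G lam)).trace) lam := by
    have h := (((Matrix.traceLinearMap (Fin k) ℝ ℝ).comp
      (LinearMap.mulLeft ℝ Ω)).toContinuousLinearMap).hasFDerivAt.comp_hasDerivAt lam hGd'
    refine h.congr_deriv ?_
    change (Ω * -(G lam * G lam)).trace = _
    simp [LinearMap.mulLeft_apply]
  refine ⟨by simpa [neg_div] using hL.div_const (k : ℝ), ?_⟩
  -- algebraic identity
  have hSG : S * G lam = 1 - lam • G lam := by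
    have : lam • G lam + S * G lam = 1 := by
      rw [← hAG, hA]; simp [add_mul, Matrix.smul_mul]
    linear_combination (norm := module) this
  have h1 : (G lam * Ω * G lam).trace = (Ω * (G lam * G lam)).trace := by
    rw [trace_mul_comm, ← mul_assoc, trace_mul_comm]
  have h2 : (S * G lam * Ω * G lam).trace
      = (Ω * G lam).trace - lam * (Ω * (G lam * G lam)).trace := by
    have e : S * G lam * Ω * G lam = Ω * G lam - lam • (G lam * Ω * G lam) := by
      rw [hSG]; simp [sub_mul, Matrix.smul_mul, mul_assoc]
    rw [e, trace_sub, trace_smul, h1, smul_eq_mul]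
  rw [h1, h2]
  have hk0 : (k : ℝ) ≠ 0 := by positivity
  field_simp
  ring
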